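/- arXiv:0803.3586 — 3 statements merged into one kernel-verified Lean document; each statement's English description precedes it below -/
import Mathlib

section
/- The group Γ_0(2) is generated by the matrices (1,1;0,1) and (1,0;2,1) together with -I. -/
open Matrix CongruenceSubgroup ModularGroup MatrixGroups

def Lmat : SL(2, ℤ) := ⟨!![1, 0; 2, 1], by norm_num [Matrix.det_fin_two_of]⟩

lemma coe_L_inv : (Lmat⁻¹ : SL(2,ℤ)).1 = !![1, 0; -2, 1] := by
  rw [Matrix.SpecialLinearGroup.coe_inv]
  simp [Lmat, adjugate_fin_two]

lemma coe_L_zpow (n : ℤ) : ((Lmat ^ n : SL(2,ℤ)) : Matrix (Fin 2) (Fin 2) ℤ) = !![1, 0; 2 * n, 1] := by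
  induction n using Int.induction_on with
  | zero => simp [Matrix.one_fin_two]
  | succ n h =>
    rw [_root_.zpow_add, zpow_one, Matrix.SpecialLinearGroup.coe_mul, h]
    show _ * (Lmat : Matrix (Fin 2) (Fin 2) ℤ) = _
    rw [show (Lmat : Matrix (Fin 2) (Fin 2) ℤ) = !![1,0;2,1] from rfl, Matrix.mul_fin_two]
    congrm !![_, _; ?_, _] <;> ring
  | pred n h =>
    rw [_root_.zpow_sub, zpow_one, Matrix.SpecialLinearGroup.coe_mul, h, coe_L_inv, Matrix.mul_fin_two]
    congrm !![?_, ?_; ?_, ?_] <;> ring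

lemma T_zpow_mul_coe (m : ℤ) (γ : SL(2,ℤ)) :
    ((T ^ m * γ : SL(2,ℤ)) : Matrix (Fin 2) (Fin 2) ℤ)
      = !![γ 0 0 + m * γ 1 0, γ 0 1 + m * γ 1 1; γ 1 0, γ 1 1] := by
  rw [Matrix.SpecialLinearGroup.coe_mul, coe_T_zpow]
  ext i j
  fin_cases i <;> fin_cases j <;>
    simp [Matrix.mul_apply, Fin.sum_univ_two]

lemma L_zpow_mul_coe (n : ℤ) (γ : SL(2,ℤ)) :
    ((Lmat ^ n * γ : SL(2,ℤ)) : Matrix (Fin 2) (Fin 2) ℤ)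
      = !![γ 0 0, γ 0 1; 2 * n * γ 0 0 + γ 1 0, 2 * n * γ 0 1 + γ 1 1] := by
  rw [Matrix.SpecialLinearGroup.coe_mul, coe_L_zpow]
  ext i j
  fin_cases i <;> fin_cases j <;>
    simp [Matrix.mul_apply, Fin.sum_univ_two]

lemma exists_shift (a c : ℤ) (ha : ¬ (2 ∣ a)) (hc : 2 ∣ c) (ha0 : 0 < a) :
    ∃ n : ℤ, 2 * n * a + c < a ∧ -a < 2 * n * a + c := by
  have h2a : (0:ℤ) < 2 * a := by omega
  have hr0 : 0 ≤ c % (2 * a) := Int.emod_nonneg c (by omega)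
  have hr1 : c % (2 * a) < 2 * a := Int.emod_lt_of_pos c h2a
  have hrd : c % (2 * a) = c - 2 * a * (c / (2 * a)) := by rw [Int.emod_def]
  have hre : 2 ∣ c % (2 * a) := by
    have : (2:ℤ) ∣ 2 * a * (c / (2 * a)) := ⟨a * (c / (2 * a)), by ring⟩
    omega
  rcases lt_or_gt_of_ne (show c % (2*a) ≠ a by omega) with h | h
  · exact ⟨-(c / (2 * a)), by constructor <;> nlinarith [hrd]⟩
  · exact ⟨-(c / (2 * a)) - 1, by constructor <;> nlinarith [hrd]⟩

lemma mem_of_even (γ : SL(2,ℤ)) (h2 : 2 ∣ γ 1 0) :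
    γ ∈ Subgroup.closure ({T, Lmat, -1} : Set SL(2,ℤ)) := by
  have hT : T ∈ Subgroup.closure ({T, Lmat, -1} : Set SL(2,ℤ)) :=
    Subgroup.subset_closure (by simp)
  have hL : Lmat ∈ Subgroup.closure ({T, Lmat, -1} : Set SL(2,ℤ)) :=
    Subgroup.subset_closure (by simp)
  have hN : (-1 : SL(2,ℤ)) ∈ Subgroup.closure ({T, Lmat, -1} : Set SL(2,ℤ)) :=
    Subgroup.subset_closure (by simp)
  suffices H : ∀ c : ℕ, ∀ γ : SL(2,ℤ), (γ 1 0).natAbs = c → 2 ∣ γ 1 0 →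
      γ ∈ Subgroup.closure ({T, Lmat, -1} : Set SL(2,ℤ)) from H _ γ rfl h2
  intro c
  induction c using Nat.strong_induction_on with
  | _ c IH =>
    intro γ hc h2
    have hdet : γ 0 0 * γ 1 1 - γ 0 1 * γ 1 0 = 1 := by
      have := γ.2; rwa [Matrix.det_fin_two] at this
    by_cases h0 : γ 1 0 = 0
    · -- c = 0 : γ = ± T^b
      have had : γ 0 0 * γ 1 1 = 1 := by rw [h0] at hdet; linarith
      rcases Int.mul_eq_one_iff_eq_one_or_neg_one.mp had with ⟨h1a, h1d⟩ | ⟨h1a, h1d⟩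
      · have hg : γ = T ^ (γ 0 1) := by
          apply Subtype.ext
          rw [coe_T_zpow]
          ext i j
          fin_cases i <;> fin_cases j <;> simp [h1a, h1d, h0]
        rw [hg]; exact Subgroup.zpow_mem _ hT _
      · have hg : γ = -1 * T ^ (-(γ 0 1)) := by
          apply Subtype.ext
          have h5 : ((-1 * T ^ (-(γ 0 1)) : SL(2,ℤ)) : Matrix (Fin 2) (Fin 2) ℤ)
              = -(!![1, -(γ 0 1); 0, 1]) := by
            rw [Matrix.SpecialLinearGroup.coe_mul, coe_T_zpow]; simp
          rw [h5]
          ext i j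
          fin_cases i <;> fin_cases j <;> simp [h1a, h1d, h0]
        rw [hg]
        exact Subgroup.mul_mem _ hN (Subgroup.zpow_mem _ hT _)
    · -- reduce
      have hodd : ¬ (2 ∣ γ 0 0) := by
        intro hd
        have : (2:ℤ) ∣ γ 0 0 * γ 1 1 - γ 0 1 * γ 1 0 :=
          dvd_sub (hd.mul_right _) (Dvd.dvd.mul_left h2 _)
        rw [hdet] at this; norm_num at this
      set m : ℤ := -(γ 0 0 / γ 1 0) with hm
      set γ' : SL(2,ℤ) := T ^ m * γ with hγ'
      have hco : (γ' : Matrix (Fin 2) (Fin 2) ℤ)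
          = !![γ 0 0 + m * γ 1 0, γ 0 1 + m * γ 1 1; γ 1 0, γ 1 1] := T_zpow_mul_coe m γ
      have ha' : γ' 0 0 = γ 0 0 % γ 1 0 := by
        show (γ' : Matrix (Fin 2) (Fin 2) ℤ) 0 0 = _
        rw [hco]; simp [Int.emod_def, hm]; ring
      have hc' : γ' 1 0 = γ 1 0 := by
        show (γ' : Matrix (Fin 2) (Fin 2) ℤ) 1 0 = _
        rw [hco]; simp
      have ha'0 : 0 ≤ γ' 0 0 := ha' ▸ Int.emod_nonneg _ h0
      have ha'lt : γ' 0 0 < ((γ 1 0).natAbs : ℤ) := by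
        rw [ha']
        exact Int.emod_lt _ h0
      have ha'odd : ¬ (2 ∣ γ' 0 0) := by
        rw [ha', Int.emod_def]
        have : (2:ℤ) ∣ γ 1 0 * (γ 0 0 / γ 1 0) := h2.mul_right _
        omega
      have ha'pos : 0 < γ' 0 0 := by rcases ha'0.lt_or_eq with h|h; exact h; omega
      obtain ⟨n, hn1, hn2⟩ := exists_shift (γ' 0 0) (γ' 1 0) ha'odd (hc' ▸ h2) ha'pos
      set γ'' : SL(2,ℤ) := Lmat ^ n * γ' with hγ''
      have hc'' : γ'' 1 0 = 2 * n * γ' 0 0 + γ' 1 0 := by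
        show (γ'' : Matrix (Fin 2) (Fin 2) ℤ) 1 0 = _
        rw [L_zpow_mul_coe n γ']; simp
      have hmem : γ'' ∈ Subgroup.closure ({T, Lmat, -1} : Set SL(2,ℤ)) := by
        refine IH (γ'' 1 0).natAbs ?_ γ'' rfl ?_
        · omega
        · rw [hc'', hc']
          rcases h2 with ⟨k, hk⟩
          exact ⟨n * γ' 0 0 + k, by rw [hk]; ring⟩
      have hgg : γ = (T ^ m)⁻¹ * ((Lmat ^ n)⁻¹ * γ'') := by
        rw [hγ'', hγ']; group
      rw [hgg]
      exact Subgroup.mul_mem _ (Subgroup.inv_mem _ (Subgroup.zpow_mem _ hT m))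
        (Subgroup.mul_mem _ (Subgroup.inv_mem _ (Subgroup.zpow_mem _ hL n)) hmem)

/-- `Γ₀(2)` is generated by `(1,1;0,1)`, `(1,0;2,1)` and `-I`. -/
theorem Gamma0_two_generators :
    Gamma0 2 = Subgroup.closure
      ({⟨!![1, 1; 0, 1], by norm_num [Matrix.det_fin_two_of]⟩,
        ⟨!![1, 0; 2, 1], by norm_num [Matrix.det_fin_two_of]⟩,
        -1} : Set (Matrix.SpecialLinearGroup (Fin 2) ℤ)) := by
  have hset : ({⟨!![1, 1; 0, 1], by norm_num [Matrix.det_fin_two_of]⟩,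
        ⟨!![1, 0; 2, 1], by norm_num [Matrix.det_fin_two_of]⟩,
        -1} : Set (Matrix.SpecialLinearGroup (Fin 2) ℤ)) = {T, Lmat, -1} := rfl
  rw [hset]
  apply le_antisymm
  · intro γ hγ
    have h2 : ((γ 1 0 : ℤ) : ZMod 2) = 0 := Gamma0_mem.mp hγ
    exact mem_of_even γ ((ZMod.intCast_zmod_eq_zero_iff_dvd _ 2).mp h2)
  · rw [Subgroup.closure_le]
    rintro x hx
    simp only [Set.mem_insert_iff, Set.mem_singleton_iff] at hx
    rcases hx with rfl | rfl | rfl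
    · rw [SetLike.mem_coe, Gamma0_mem]; rfl
    · rw [SetLike.mem_coe, Gamma0_mem]
      show ((2 : ℤ) : ZMod 2) = 0
      decide
    · rw [SetLike.mem_coe, Gamma0_mem]
      show (((-1 : Matrix (Fin 2) (Fin 2) ℤ) 1 0 : ℤ) : ZMod 2) = 0
      simp
end

section
/- The group Γ_0(4) is generated by -I, (1,1;0,1), and (1,0;4,1). -/
open Matrix CongruenceSubgroup
open scoped MatrixGroups

def Tg (e : ℤ) : SL(2, ℤ) := ⟨!![1, e; 0, 1], by simp [Matrix.det_fin_two_of]⟩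
def Lg (e : ℤ) : SL(2, ℤ) := ⟨!![1, 0; e, 1], by simp [Matrix.det_fin_two_of]⟩

lemma Tg_mul_Tg (x y : ℤ) : Tg x * Tg y = Tg (x + y) := by
  apply Subtype.ext; rw [Matrix.SpecialLinearGroup.coe_mul]; simp [Tg, Matrix.mul_fin_two, add_comm]
lemma Lg_mul_Lg (x y : ℤ) : Lg x * Lg y = Lg (x + y) := by
  apply Subtype.ext; rw [Matrix.SpecialLinearGroup.coe_mul]; simp [Lg, Matrix.mul_fin_two, add_comm]
lemma Tg_zero : Tg 0 = 1 := by apply Subtype.ext; simp [Tg, Matrix.one_fin_two]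
lemma Lg_zero : Lg 0 = 1 := by apply Subtype.ext; simp [Lg, Matrix.one_fin_two]
lemma Tg_mul_00 (e : ℤ) (A : SL(2,ℤ)) : (Tg e * A).1 0 0 = A.1 0 0 + e * A.1 1 0 := by
  rw [Matrix.SpecialLinearGroup.coe_mul]; simp [Tg, Matrix.mul_apply, Fin.sum_univ_two]
lemma Tg_mul_10 (e : ℤ) (A : SL(2,ℤ)) : (Tg e * A).1 1 0 = A.1 1 0 := by
  rw [Matrix.SpecialLinearGroup.coe_mul]; simp [Tg, Matrix.mul_apply, Fin.sum_univ_two]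
lemma Lg_mul_00 (e : ℤ) (A : SL(2,ℤ)) : (Lg e * A).1 0 0 = A.1 0 0 := by
  rw [Matrix.SpecialLinearGroup.coe_mul]; simp [Lg, Matrix.mul_apply, Fin.sum_univ_two]
lemma Lg_mul_10 (e : ℤ) (A : SL(2,ℤ)) : (Lg e * A).1 1 0 = e * A.1 0 0 + A.1 1 0 := by
  rw [Matrix.SpecialLinearGroup.coe_mul]; simp [Lg, Matrix.mul_apply, Fin.sum_univ_two]
lemma Tg_eq_T_zpow (e : ℤ) : Tg e = ModularGroup.T ^ e := by
  apply Subtype.ext; simp [Tg, ModularGroup.coe_T_zpow]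

lemma cancel_T (e : ℤ) (A : SL(2,ℤ)) : Tg (-e) * (Tg e * A) = A := by
  rw [← mul_assoc, Tg_mul_Tg, neg_add_cancel, Tg_zero, one_mul]
lemma cancel_L (e : ℤ) (A : SL(2,ℤ)) : Lg (-e) * (Lg e * A) = A := by
  rw [← mul_assoc, Lg_mul_Lg, neg_add_cancel, Lg_zero, one_mul]

lemma main_lemma (H : Subgroup (SL(2,ℤ))) (hT : ∀ e : ℤ, Tg e ∈ H)
    (hL : ∀ e : ℤ, Lg (4 * e) ∈ H) (hN : (-1 : SL(2,ℤ)) ∈ H) :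
    ∀ n (A : SL(2, ℤ)), (4:ℤ) ∣ A.1 1 0 → (A.1 0 0).natAbs + (A.1 1 0).natAbs ≤ n →
      A ∈ H := by
  intro n
  induction n with
  | zero =>
    intro A hc hle
    exfalso
    have hdet := A.2
    rw [Matrix.det_fin_two] at hdet
    have h0 : A.1 0 0 = 0 := by omega
    have h1 : A.1 1 0 = 0 := by omega
    rw [h0, h1] at hdet
    simp at hdet
  | succ n ih =>
    intro A hc hle
    have hdet := A.2
    rw [Matrix.det_fin_two] at hdet
    -- a is odd
    have ha : ¬ (2:ℤ) ∣ A.1 0 0 := by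
      rintro ⟨k, hk⟩
      obtain ⟨m, hm⟩ := hc
      have : (2:ℤ) ∣ 1 := by
        rw [← hdet, hk, hm]
        exact Dvd.dvd.sub ⟨k * A.1 1 1, by ring⟩ ⟨A.1 0 1 * 2 * m, by ring⟩
      norm_num at this
    by_cases hc0 : A.1 1 0 = 0
    · -- base case
      rw [hc0] at hdet
      simp only [mul_zero, sub_zero] at hdet
      rcases Int.mul_eq_one_iff_eq_one_or_neg_one.mp hdet with ⟨h1, h2⟩ | ⟨h1, h2⟩
      · have hA : A = Tg (A.1 0 1) := by
          apply Subtype.ext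
          rw [Matrix.eta_fin_two A.1, h1, h2, hc0]
          rfl
        rw [hA]; exact hT _
      · have hA : A = -1 * Tg (-(A.1 0 1)) := by
          apply Subtype.ext
          have h9 : ((-1 : SL(2,ℤ)) * Tg (-(A.1 0 1))).1 = !![-1, A.1 0 1; 0, -1] := by
            rw [neg_one_mul, Matrix.SpecialLinearGroup.coe_neg]
            simp [Tg]
          rw [h9, Matrix.eta_fin_two A.1, h1, h2, hc0]
          simp
        rw [hA]; exact H.mul_mem hN (hT _)
    · by_cases hbig : (A.1 1 0).natAbs < 2 * (A.1 0 0).natAbs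
      · -- T step
        have hkey : ∃ e : ℤ, (A.1 0 0 + e * A.1 1 0).natAbs < (A.1 0 0).natAbs := by
          by_cases h : (A.1 0 0 + A.1 1 0).natAbs < (A.1 0 0).natAbs
          · exact ⟨1, by simpa using h⟩
          · exact ⟨-1, by rw [neg_one_mul, ← sub_eq_add_neg]; omega⟩
        obtain ⟨e, he⟩ := hkey
        have := ih (Tg e * A) (by rw [Tg_mul_10]; exact hc)
          (by rw [Tg_mul_00, Tg_mul_10]; omega)
        have hA : A = Tg (-e) * (Tg e * A) := (cancel_T e A).symm
        rw [hA]
        exact H.mul_mem (hT _) this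
      · -- L step
        have hkey : ∃ e : ℤ, (4 * e * A.1 0 0 + A.1 1 0).natAbs < (A.1 1 0).natAbs := by
          by_cases h : (4 * A.1 0 0 + A.1 1 0).natAbs < (A.1 1 0).natAbs
          · exact ⟨1, by simpa using h⟩
          · refine ⟨-1, ?_⟩
            have h4 : (4:ℤ) ∣ A.1 1 0 := hc
            omega
        obtain ⟨e, he⟩ := hkey
        have := ih (Lg (4 * e) * A)
          (by rw [Lg_mul_10]; exact Dvd.dvd.add ⟨e * A.1 0 0, by ring⟩ hc)
          (by rw [Lg_mul_00, Lg_mul_10]; omega)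
        have hA : A = Lg (-(4 * e)) * (Lg (4 * e) * A) := (cancel_L _ A).symm
        rw [hA]
        have hmem : Lg (-(4*e)) ∈ H := by rw [show -(4*e) = 4 * (-e) by ring]; exact hL _
        exact H.mul_mem hmem this

lemma Lg_inv : (Lg 4)⁻¹ = Lg (-4) := by
  symm; apply eq_inv_of_mul_eq_one_left; rw [Lg_mul_Lg]; norm_num [Lg_zero]
lemma Lg_zpow (e : ℤ) : (Lg 4) ^ e = Lg (4 * e) := by
  induction e using Int.induction_on with
  | zero => simpa using Lg_zero.symm
  | succ n ih => rw [_root_.zpow_add_one, ih, Lg_mul_Lg]; ring_nf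
  | pred n ih => rw [_root_.zpow_sub_one, ih, Lg_inv, Lg_mul_Lg]; ring_nf


/-- `Γ₀(4)` is generated by `(1,1;0,1)`, `(1,0;2,1)` and `-I`. -/
theorem Gamma0_four_generators :
    Gamma0 4 = Subgroup.closure
      ({⟨!![1, 1; 0, 1], by norm_num [Matrix.det_fin_two_of]⟩,
        ⟨!![1, 0; 4, 1], by norm_num [Matrix.det_fin_two_of]⟩,
        -1} : Set (Matrix.SpecialLinearGroup (Fin 2) ℤ)) := by
  apply le_antisymm
  · intro A hA
    have hc : (4:ℤ) ∣ A.1 1 0 := by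
      have := Gamma0_mem.mp hA
      exact_mod_cast (ZMod.intCast_zmod_eq_zero_iff_dvd (A.1 1 0) 4).mp this
    refine main_lemma _ ?_ ?_ ?_ ((A.1 0 0).natAbs + (A.1 1 0).natAbs) A hc le_rfl
    · intro e
      rw [Tg_eq_T_zpow]
      exact Subgroup.zpow_mem _ (Subgroup.subset_closure (by left; exact Subtype.ext rfl)) e
    · intro e
      rw [← Lg_zpow]
      exact Subgroup.zpow_mem _ (Subgroup.subset_closure (by right; left; exact Subtype.ext rfl)) e
    · exact Subgroup.subset_closure (by right; right; rfl)
  · rw [Subgroup.closure_le]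
    rintro x (rfl | rfl | rfl)
    · change _ ∈ Gamma0 4; refine Gamma0_mem.mpr ?_; simp
    · change _ ∈ Gamma0 4; refine Gamma0_mem.mpr ?_; simp; decide
    · rw [SetLike.mem_coe, Gamma0_mem]; simp
end

section
/- Conjugating Γ_0(2) by the translation T_{1/2} = (1, 1/2; 0, 1) yields a group containing the subgroup generated by (1,1;0,1) and W_4 = (0,-1/2; 2,0); in particular T_{1/2}^{-1} (1,0;2,1) T_{1/2} and W_4 generate the same subgroup of PSL_2(ℝ) together with translations, realizing Γ_0^*(4) = T_{1/2}^{-1} Γ_0(2) T_{1/2}. -/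
open Matrix

abbrev SL2R := Matrix.SpecialLinearGroup (Fin 2) ℝ

/-- The translation `T = (1,1;0,1)` in `SL(2,ℝ)`. -/
noncomputable def T1 : SL2R := ⟨!![1, 1; 0, 1], by norm_num [Matrix.det_fin_two_of]⟩

/-- The Fricke involution `W₄ = (0,-1/2;2,0)`. -/
noncomputable def W4 : SL2R := ⟨!![0, -1/2; 2, 0], by norm_num [Matrix.det_fin_two_of]⟩

/-- The half-translation `T_{1/2} = (1,1/2;0,1)`. -/
noncomputable def Thalf : SL2R := ⟨!![1, 1/2; 0, 1], by norm_num [Matrix.det_fin_two_of]⟩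

/-- `Γ₀(2)` viewed inside `SL(2,ℝ)`: integer entries with even lower-left entry. -/
def Gamma0TwoR : Set SL2R :=
  {g | (∀ i j, ∃ n : ℤ, g.1 i j = (n : ℝ)) ∧ ∃ m : ℤ, g.1 1 0 = 2 * (m : ℝ)}

open MatrixGroups

abbrev SL2Z := Matrix.SpecialLinearGroup (Fin 2) ℤ

def Lz : SL2Z := ⟨!![1, 0; 2, 1], by norm_num [Matrix.det_fin_two_of]⟩

lemma coe_Lz_inv : ((Lz⁻¹ : SL2Z) : Matrix (Fin 2) (Fin 2) ℤ) = !![1, 0; -2, 1] := by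
  rw [Matrix.SpecialLinearGroup.SL2_inv_expl]
  ext i j
  fin_cases i <;> fin_cases j <;> simp [Lz]

lemma coe_Lz_zpow (n : ℤ) :
    ((Lz ^ n : SL2Z) : Matrix (Fin 2) (Fin 2) ℤ) = !![1, 0; 2 * n, 1] := by
  induction' n using Int.induction_on with n h n h
  · rw [zpow_zero, Matrix.SpecialLinearGroup.coe_one, Matrix.one_fin_two]; norm_num
  · rw [_root_.zpow_add, zpow_one, Matrix.SpecialLinearGroup.coe_mul, h]
    show _ * (Lz : Matrix (Fin 2) (Fin 2) ℤ) = _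
    rw [show (Lz : Matrix (Fin 2) (Fin 2) ℤ) = !![1,0;2,1] from rfl, Matrix.mul_fin_two]
    congrm !![?_, ?_; ?_, ?_] <;> ring
  · rw [_root_.zpow_sub, zpow_one, Matrix.SpecialLinearGroup.coe_mul, h, coe_Lz_inv,
      Matrix.mul_fin_two]
    congrm !![?_, ?_; ?_, ?_] <;> ring

def Hz : Subgroup SL2Z := Subgroup.closure {ModularGroup.T, Lz, -1}

lemma Tz_mem : ModularGroup.T ∈ Hz := Subgroup.subset_closure (by simp)
lemma Lz_mem : Lz ∈ Hz := Subgroup.subset_closure (by simp)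
lemma negone_mem : (-1 : SL2Z) ∈ Hz := Subgroup.subset_closure (by simp)

lemma mem_Hz_of_c_zero (γ : SL2Z) (hc : γ.1 1 0 = 0) : γ ∈ Hz := by
  have hdet : γ.1 0 0 * γ.1 1 1 - γ.1 0 1 * γ.1 1 0 = 1 := by
    have := γ.2; rwa [Matrix.det_fin_two] at this
  rw [hc, mul_zero, sub_zero] at hdet
  rcases Int.mul_eq_one_iff_eq_one_or_neg_one.mp hdet with ⟨ha, hd⟩ | ⟨ha, hd⟩
  · have hγ : γ = ModularGroup.T ^ (γ.1 0 1) := by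
      apply Subtype.ext
      rw [ModularGroup.coe_T_zpow]
      ext i j
      fin_cases i <;> fin_cases j <;> simp [ha, hd, hc]
    rw [hγ]; exact zpow_mem Tz_mem _
  · have hγ : γ = (-1) * ModularGroup.T ^ (-(γ.1 0 1)) := by
      apply Subtype.ext
      rw [Matrix.SpecialLinearGroup.coe_mul, ModularGroup.coe_T_zpow,
        Matrix.SpecialLinearGroup.coe_neg, Matrix.SpecialLinearGroup.coe_one,
        ]
      ext i j
      fin_cases i <;> fin_cases j <;>
        simp [ha, hd, hc, Matrix.mul_apply, Fin.sum_univ_two]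
    rw [hγ]; exact mul_mem negone_mem (zpow_mem Tz_mem _)

lemma mem_Hz_aux : ∀ n : ℕ, ∀ γ : SL2Z, 2 ∣ γ.1 1 0 → (γ.1 1 0).natAbs ≤ n → γ ∈ Hz := by
  intro n
  induction n with
  | zero =>
    intro γ _ hle
    exact mem_Hz_of_c_zero γ (by omega)
  | succ n ih =>
    intro γ hdvd hle
    by_cases hle' : (γ.1 1 0).natAbs ≤ n
    · exact ih γ hdvd hle'
    set a := γ.1 0 0 with ha_def
    set b := γ.1 0 1 with hb_def
    set c := γ.1 1 0 with hc_def
    set d := γ.1 1 1 with hd_def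
    have hc0 : c ≠ 0 := by
      intro h; rw [h] at hle'; simp at hle'
    have hdet : a * d - b * c = 1 := by
      have := γ.2; rwa [Matrix.det_fin_two] at this
    have hodd : ¬ (2 ∣ a) := by
      intro h2
      have : (2 : ℤ) ∣ 1 := by
        rw [← hdet]
        exact dvd_sub (h2.mul_right d) (hdvd.mul_left b)
      norm_num at this
    set m := -(a / c) with hm_def
    set a' := a + m * c with ha'_def
    have ha'emod : a' = a % c := by rw [Int.emod_def]; ring
    have ha'nonneg : 0 ≤ a' := ha'emod ▸ Int.emod_nonneg a hc0
    have ha'odd : ¬ (2 ∣ a') := by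
      intro h2
      exact hodd (by have : a = a' - m * c := by ring
                     rw [this]; exact dvd_sub h2 (hdvd.mul_left m))
    have ha'pos : 0 < a' := lt_of_le_of_ne ha'nonneg (by intro h; exact ha'odd (by omega))
    have ha'lt : a' < |c| := by rw [ha'emod, Int.abs_eq_natAbs]; exact Int.emod_lt a hc0
    rw [Int.abs_eq_natAbs] at ha'lt
    set k := -((c + a') / (2 * a')) with hk_def
    set c' := 2 * k * a' + c with hc'_def
    have hc'emod : c' = (c + a') % (2 * a') - a' := by rw [Int.emod_def]; ring
    have h2a' : (0:ℤ) < 2 * a' := by omega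
    have hr1 : 0 ≤ (c + a') % (2 * a') := Int.emod_nonneg _ (by omega)
    have hr2 : (c + a') % (2 * a') < 2 * a' := Int.emod_lt_of_pos _ h2a'
    have hc'bound : (c').natAbs ≤ n := by omega
    set γ' : SL2Z := Lz ^ k * (ModularGroup.T ^ m * γ) with hγ'_def
    have hγ'coe : γ'.1 = !![1,0;2*k,1] * (!![1,m;0,1] * γ.1) := by
      rw [hγ'_def, Matrix.SpecialLinearGroup.coe_mul, Matrix.SpecialLinearGroup.coe_mul,
        coe_Lz_zpow, ModularGroup.coe_T_zpow]
    have hγ'10 : γ'.1 1 0 = c' := by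
      rw [hγ'coe, Matrix.eta_fin_two γ.1, ← ha_def, ← hb_def, ← hc_def, ← hd_def,
        Matrix.mul_fin_two, Matrix.mul_fin_two]
      simp only [Matrix.cons_val', Matrix.cons_val_zero, Matrix.cons_val_one,
        Matrix.head_cons, Matrix.empty_val', Matrix.cons_val_fin_one, Matrix.head_fin_const,
        Matrix.of_apply]
      rw [hc'_def]
      ring
    have hγ'mem : γ' ∈ Hz := by
      apply ih γ'
      · rw [hγ'10, hc'_def]
        exact dvd_add ⟨k * a', by ring⟩ hdvd
      · rw [hγ'10]; exact hc'bound
    have hγeq : γ = ModularGroup.T ^ (-m) * (Lz ^ (-k) * γ') := by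
      rw [hγ'_def]; group
    rw [hγeq]
    exact mul_mem (zpow_mem Tz_mem _) (mul_mem (zpow_mem Lz_mem _) hγ'mem)

lemma mem_Hz (γ : SL2Z) (h : 2 ∣ γ.1 1 0) : γ ∈ Hz := mem_Hz_aux _ γ h le_rfl

noncomputable def phi : SL2Z →* SL2R := Matrix.SpecialLinearGroup.map (Int.castRingHom ℝ)
noncomputable def L1 : SL2R := ⟨!![1, 0; 2, 1], by norm_num [Matrix.det_fin_two_of]⟩
noncomputable def Vg : SL2R := ⟨!![1, -1; 2, -1], by norm_num [Matrix.det_fin_two_of]⟩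

lemma coe_Thalf_inv : ((Thalf⁻¹ : SL2R) : Matrix (Fin 2) (Fin 2) ℝ) = !![1, -1/2; 0, 1] := by
  rw [Matrix.SpecialLinearGroup.SL2_inv_expl]
  ext i j
  fin_cases i <;> fin_cases j <;> norm_num [Thalf]

lemma E1 : Thalf⁻¹ * T1 * Thalf = T1 := by
  apply Subtype.ext
  rw [Matrix.SpecialLinearGroup.coe_mul, Matrix.SpecialLinearGroup.coe_mul, coe_Thalf_inv]
  ext i j
  fin_cases i <;> fin_cases j <;>
    norm_num [T1, Thalf, Matrix.mul_apply, Fin.sum_univ_two]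

lemma E2 : Thalf⁻¹ * L1 * Thalf = W4 * T1 := by
  apply Subtype.ext
  rw [Matrix.SpecialLinearGroup.coe_mul, Matrix.SpecialLinearGroup.coe_mul,
    Matrix.SpecialLinearGroup.coe_mul, coe_Thalf_inv]
  ext i j
  fin_cases i <;> fin_cases j <;>
    norm_num [T1, W4, L1, Thalf, Matrix.mul_apply, Fin.sum_univ_two]

lemma E3 : Thalf⁻¹ * (-1) * Thalf = (-1 : SL2R) := by
  apply Subtype.ext
  rw [Matrix.SpecialLinearGroup.coe_mul, Matrix.SpecialLinearGroup.coe_mul, coe_Thalf_inv]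
  ext i j
  fin_cases i <;> fin_cases j <;>
    norm_num [Thalf, Matrix.SpecialLinearGroup.coe_neg, Matrix.SpecialLinearGroup.coe_one,
      Matrix.mul_apply, Fin.sum_univ_two]

lemma E4 : Thalf⁻¹ * Vg * Thalf = W4 := by
  apply Subtype.ext
  rw [Matrix.SpecialLinearGroup.coe_mul, Matrix.SpecialLinearGroup.coe_mul, coe_Thalf_inv]
  ext i j
  fin_cases i <;> fin_cases j <;>
    norm_num [W4, Vg, Thalf, Matrix.mul_apply, Fin.sum_univ_two]

lemma phi_T : phi ModularGroup.T = T1 := by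
  apply Subtype.ext
  rw [phi, Matrix.SpecialLinearGroup.map_apply_coe]
  ext i j
  fin_cases i <;> fin_cases j <;>
    norm_num [phi, T1, ModularGroup.T, Matrix.SpecialLinearGroup.map_apply_coe]

lemma phi_Lz : phi Lz = L1 := by
  apply Subtype.ext
  rw [phi, Matrix.SpecialLinearGroup.map_apply_coe]
  ext i j
  fin_cases i <;> fin_cases j <;>
    norm_num [phi, L1, Lz, Matrix.SpecialLinearGroup.map_apply_coe]

lemma phi_neg_one : phi (-1) = (-1 : SL2R) := by
  apply Subtype.ext
  ext i j
  fin_cases i <;> fin_cases j <;>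
    norm_num [phi, Matrix.SpecialLinearGroup.map_apply_coe,
      Matrix.SpecialLinearGroup.coe_neg, Matrix.SpecialLinearGroup.coe_one]

lemma T1_mem_G : T1 ∈ Gamma0TwoR := by
  constructor
  · intro i j
    fin_cases i <;> fin_cases j
    exacts [⟨1, by norm_num [T1]⟩, ⟨1, by norm_num [T1]⟩, ⟨0, by norm_num [T1]⟩,
      ⟨1, by norm_num [T1]⟩]
  · exact ⟨0, by norm_num [T1]⟩

lemma Vg_mem_G : Vg ∈ Gamma0TwoR := by
  constructor
  · intro i j
    fin_cases i <;> fin_cases j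
    exacts [⟨1, by norm_num [Vg]⟩, ⟨-1, by norm_num [Vg]⟩, ⟨2, by norm_num [Vg]⟩,
      ⟨-1, by norm_num [Vg]⟩]
  · exact ⟨1, by norm_num [Vg]⟩

lemma neg_one_mem_G : (-1 : SL2R) ∈ Gamma0TwoR := by
  constructor
  · intro i j
    fin_cases i <;> fin_cases j
    exacts [⟨-1, by norm_num [Matrix.SpecialLinearGroup.coe_neg,
        Matrix.SpecialLinearGroup.coe_one]⟩,
      ⟨0, by norm_num [Matrix.SpecialLinearGroup.coe_neg, Matrix.SpecialLinearGroup.coe_one]⟩,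
      ⟨0, by norm_num [Matrix.SpecialLinearGroup.coe_neg, Matrix.SpecialLinearGroup.coe_one]⟩,
      ⟨-1, by norm_num [Matrix.SpecialLinearGroup.coe_neg, Matrix.SpecialLinearGroup.coe_one]⟩]
  · exact ⟨0, by norm_num [Matrix.SpecialLinearGroup.coe_neg, Matrix.SpecialLinearGroup.coe_one]⟩

/-- `Γ₀^*(4) = T_{1/2}⁻¹ Γ₀(2) T_{1/2}`: the subgroup of `SL(2,ℝ)` generated by
`(1,1;0,1)`, `W₄` and `-I` equals the group generated by the conjugate
`T_{1/2}⁻¹ Γ₀(2) T_{1/2}`. -/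
theorem Gamma0star_four_eq_conj_Gamma0_two :
    Subgroup.closure ({T1, W4, -1} : Set SL2R) =
      Subgroup.closure {x : SL2R | ∃ g ∈ Gamma0TwoR, x = Thalf⁻¹ * g * Thalf} := by
  apply le_antisymm
  · rw [Subgroup.closure_le]
    intro x hx
    apply Subgroup.subset_closure
    simp only [Set.mem_insert_iff, Set.mem_singleton_iff] at hx
    rcases hx with rfl | rfl | rfl
    · exact ⟨T1, T1_mem_G, E1.symm⟩
    · exact ⟨Vg, Vg_mem_G, E4.symm⟩
    · exact ⟨-1, neg_one_mem_G, E3.symm⟩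
  · rw [Subgroup.closure_le]
    rintro x ⟨g, ⟨hint, m, hm⟩, rfl⟩
    choose nf hnf using hint
    have hM : ((Matrix.of fun i j => nf i j : Matrix (Fin 2) (Fin 2) ℤ).map
        (Int.castRingHom ℝ)) = g.1 := by
      ext i j
      simp [Matrix.map_apply, (hnf i j).symm]
    have hdet : (Matrix.of fun i j => nf i j : Matrix (Fin 2) (Fin 2) ℤ).det = 1 := by
      have h1 := g.2
      rw [← hM, ← RingHom.mapMatrix_apply, ← RingHom.map_det] at h1
      rw [show ((Int.castRingHom ℝ) (Matrix.of fun i j => nf i j).det) = (((Matrix.of fun i j => nf i j).det : ℤ) : ℝ) from rfl] at h1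
      exact_mod_cast h1
    set γ : SL2Z := ⟨Matrix.of fun i j => nf i j, hdet⟩ with hγ_def
    have hφγ : phi γ = g := by
      apply Subtype.ext
      rw [phi, Matrix.SpecialLinearGroup.map_apply_coe]
      exact hM
    have h2 : 2 ∣ γ.1 1 0 := by
      refine ⟨m, ?_⟩
      have h1 := hnf 1 0
      rw [hm] at h1
      exact_mod_cast h1.symm
    have hmem := mem_Hz γ h2
    set ψ : SL2Z →* SL2R := ((MulAut.conj Thalf⁻¹).toMonoidHom).comp phi with hψ_def
    have hψ : ∀ y, ψ y = Thalf⁻¹ * phi y * Thalf := by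
      intro y
      simp [hψ_def, MulAut.conj_apply]
    have hle : Hz ≤ Subgroup.comap ψ (Subgroup.closure ({T1, W4, -1} : Set SL2R)) := by
      rw [Hz, Subgroup.closure_le]
      intro y hy
      simp only [Set.mem_insert_iff, Set.mem_singleton_iff] at hy
      rw [SetLike.mem_coe, Subgroup.mem_comap]
      rcases hy with rfl | rfl | rfl
      · rw [hψ, phi_T, E1]
        exact Subgroup.subset_closure (by simp)
      · rw [hψ, phi_Lz, E2]
        exact mul_mem (Subgroup.subset_closure (by simp))
          (Subgroup.subset_closure (by simp))
      · rw [hψ, phi_neg_one, E3]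
        exact Subgroup.subset_closure (by simp)
    have hfin := hle hmem
    rw [Subgroup.mem_comap, hψ, hφγ] at hfin
    exact hfin
end
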